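/- Let (Ω, ℙ) be a probability space, 𝒮 and 𝒜 finite nonempty types, S : Ω → 𝒮 and A : Ω → 𝒜 independent random variables with ℙ(S = s) > 0 and ℙ(A = a) > 0 for all s, a, and R : Ω → ℝ a square-integrable random variable. Define μ(a) = 𝔼[R·1{A = a}]/ℙ(A = a) and r(s, a) = 𝔼[R·1{S = s, A = a}]/ℙ(S = s, A = a). Let π_b(a) := ℙ(A = a), let π_e : 𝒜 → ℝ be nonnegative with ∑_a π_e(a) = 1, and set W = π_e(A)/π_b(A). Then Var(∑_{a ∈ 𝒜} π_e(a)·r(S, a)) + Var(W·(R − r(S, A))) ≤ Var(W·(R − μ(A))). -/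

import Mathlib

open MeasureTheory

/-- Variance of a real random variable: `Var(Y) = 𝔼[Y²] − (𝔼[Y])²`. -/
noncomputable def var {Ω : Type*} [MeasurableSpace Ω] (μ : Measure Ω) (Y : Ω → ℝ) : ℝ :=
  (∫ ω, (Y ω) ^ 2 ∂μ) - (∫ ω, Y ω ∂μ) ^ 2


lemma fiber_decomp {Ω : Type*} [MeasurableSpace Ω] (μ : Measure Ω)
    {𝒮 𝒜 : Type*} [Fintype 𝒮] [Fintype 𝒜]
    [MeasurableSpace 𝒮] [MeasurableSingletonClass 𝒮]
    [MeasurableSpace 𝒜] [MeasurableSingletonClass 𝒜]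
    (S : Ω → 𝒮) (A : Ω → 𝒜) (hS : Measurable S) (hA : Measurable A)
    (ψ : 𝒮 → 𝒜 → ℝ) (X : Ω → ℝ) (hX : Integrable X μ) :
    Integrable (fun ω => ψ (S ω) (A ω) * X ω) μ ∧
    ∫ ω, ψ (S ω) (A ω) * X ω ∂μ =
      ∑ s, ∑ a, ψ s a * ∫ ω, Set.indicator {ω' | S ω' = s ∧ A ω' = a} X ω ∂μ := by
  have hE : ∀ (s : 𝒮) (a : 𝒜), MeasurableSet {ω | S ω = s ∧ A ω = a} := by
    intro s a
    have h : {ω | S ω = s ∧ A ω = a} = S ⁻¹' {s} ∩ A ⁻¹' {a} := by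
      ext ω; simp [Set.mem_preimage]
    rw [h]
    exact (hS (measurableSet_singleton s)).inter (hA (measurableSet_singleton a))
  have hint : ∀ (s : 𝒮) (a : 𝒜),
      Integrable (fun ω => ψ s a * Set.indicator {ω' | S ω' = s ∧ A ω' = a} X ω) μ :=
    fun s a => (hX.indicator (hE s a)).const_mul _
  have hpt : ∀ ω, ψ (S ω) (A ω) * X ω =
      ∑ s, ∑ a, ψ s a * Set.indicator {ω' | S ω' = s ∧ A ω' = a} X ω := by
    intro ω
    rw [Finset.sum_eq_single (S ω)]
    · rw [Finset.sum_eq_single (A ω)]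
      · rw [Set.indicator_of_mem (by exact ⟨rfl, rfl⟩)]
      · intro a _ ha
        rw [Set.indicator_of_notMem (fun h => ha h.2.symm), mul_zero]
      · simp
    · intro s _ hs
      apply Finset.sum_eq_zero
      intro a _
      rw [Set.indicator_of_notMem (fun h => hs h.1.symm), mul_zero]
    · simp
  have hfe : (fun ω => ψ (S ω) (A ω) * X ω) =
      fun ω => ∑ s, ∑ a, ψ s a * Set.indicator {ω' | S ω' = s ∧ A ω' = a} X ω := funext hpt
  constructor
  · rw [hfe]
    exact integrable_finset_sum _ fun s _ => integrable_finset_sum _ fun a _ => hint s a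
  · rw [hfe, integral_finset_sum _ fun s _ => integrable_finset_sum _ fun a _ => hint s a]
    refine Finset.sum_congr rfl fun s _ => ?_
    rw [integral_finset_sum _ fun a _ => hint s a]
    exact Finset.sum_congr rfl fun a _ => integral_const_mul _ _

lemma fiberS_decomp {Ω : Type*} [MeasurableSpace Ω] (μ : Measure Ω) [IsFiniteMeasure μ]
    {𝒮 : Type*} [Fintype 𝒮] [MeasurableSpace 𝒮] [MeasurableSingletonClass 𝒮]
    (S : Ω → 𝒮) (hS : Measurable S) (φ : 𝒮 → ℝ) :
    ∫ ω, φ (S ω) ∂μ = ∑ s, φ s * (μ {ω | S ω = s}).toReal := by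
  have hE : ∀ (s : 𝒮), MeasurableSet {ω | S ω = s} := by
    intro s
    have h : {ω | S ω = s} = S ⁻¹' {s} := by ext ω; simp
    rw [h]; exact hS (measurableSet_singleton s)
  have hpt : ∀ ω, φ (S ω) =
      ∑ s, Set.indicator {ω' | S ω' = s} (fun _ => φ s) ω := by
    intro ω
    rw [Finset.sum_eq_single (S ω)]
    · rw [Set.indicator_of_mem (by exact rfl)]
    · intro s _ hs
      exact Set.indicator_of_notMem (fun h => hs h.symm) _
    · simp
  have hint : ∀ (s : 𝒮), Integrable (Set.indicator {ω' | S ω' = s} (fun _ => φ s)) μ :=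
    fun s => (integrable_const (φ s)).indicator (hE s)
  rw [show (fun ω => φ (S ω)) = fun ω => ∑ s, Set.indicator {ω' | S ω' = s} (fun _ => φ s) ω
      from funext hpt,
    integral_finset_sum _ fun s _ => hint s]
  refine Finset.sum_congr rfl fun s _ => ?_
  rw [integral_indicator_const _ (hE s), smul_eq_mul, mul_comm, measureReal_def]

lemma final_alg {𝒮 𝒜 : Type*} [Fintype 𝒮] [Fintype 𝒜]
    (p : 𝒮 → ℝ) (q : 𝒜 → ℝ) (πe : 𝒜 → ℝ) (d : 𝒮 → 𝒜 → ℝ) (H : 𝒮 → ℝ) (c : ℝ)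
    (hp : ∀ s, 0 ≤ p s) (hq : ∀ a, 0 < q a)
    (hsp : ∑ s, p s = 1) (hsq : ∑ a, q a = 1)
    (hHc : ∀ s, H s - c = ∑ a, πe a * d s a) :
    (∑ s, p s * (H s)^2) - (∑ s, p s * H s)^2 ≤
      ∑ s, ∑ a, (p s * (πe a^2 / q a)) * d s a^2 := by
  have hCS : ∀ s, (H s - c)^2 ≤ ∑ a, πe a^2 / q a * d s a^2 := by
    intro s
    have h := Finset.sum_mul_sq_le_sq_mul_sq Finset.univ
      (fun a => Real.sqrt (q a)) (fun a => πe a * d s a / Real.sqrt (q a))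
    have e1 : ∑ a, Real.sqrt (q a) * (πe a * d s a / Real.sqrt (q a)) = ∑ a, πe a * d s a :=
      Finset.sum_congr rfl fun a _ => by
        rw [mul_comm, div_mul_cancel₀]
        exact Real.sqrt_ne_zero'.mpr (hq a)
    have e2 : ∑ a, Real.sqrt (q a) ^ 2 = (1:ℝ) := by
      rw [← hsq]; exact Finset.sum_congr rfl fun a _ => Real.sq_sqrt (hq a).le
    have e3 : ∑ a, (πe a * d s a / Real.sqrt (q a))^2 = ∑ a, πe a^2 / q a * d s a^2 :=
      Finset.sum_congr rfl fun a _ => by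
        rw [div_pow, Real.sq_sqrt (hq a).le]; ring
    rw [e1, e2, e3, one_mul] at h
    rw [hHc s]; exact h
  calc (∑ s, p s * (H s)^2) - (∑ s, p s * H s)^2
      ≤ ∑ s, p s * (H s - c)^2 := by
        have e : ∑ s, p s * (H s - c)^2
            = (∑ s, p s * (H s)^2) - 2*c*(∑ s, p s * H s) + c^2 * (∑ s, p s) := by
          trans ∑ s, (p s * (H s)^2 - 2*c*(p s * H s) + c^2 * p s)
          · exact Finset.sum_congr rfl fun s _ => by ring
          · rw [Finset.sum_add_distrib, Finset.sum_sub_distrib, ← Finset.mul_sum, ← Finset.mul_sum]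
        rw [e, hsp]
        nlinarith [sq_nonneg ((∑ s, p s * H s) - c)]
    _ ≤ ∑ s, p s * (∑ a, πe a^2 / q a * d s a^2) :=
        Finset.sum_le_sum fun s _ => mul_le_mul_of_nonneg_left (hCS s) (hp s)
    _ = _ := Finset.sum_congr rfl fun s _ => by
        rw [Finset.mul_sum]; exact Finset.sum_congr rfl fun a _ => by ring

/-- First inequality of Lemma 3.1: with `S ⟂ A`, `W = π_e(A)/π_b(A)`,
`Var(∑ₐ π_e(a) r(S,a)) + Var(W (R − r(S,A))) ≤ Var(W (R − μ(A)))`. -/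
theorem stmt_11 {Ω : Type*} [MeasurableSpace Ω] (μ : Measure Ω) [IsProbabilityMeasure μ]
    {𝒮 𝒜 : Type*} [Fintype 𝒮] [Nonempty 𝒮] [Fintype 𝒜] [Nonempty 𝒜]
    [MeasurableSpace 𝒮] [MeasurableSingletonClass 𝒮]
    [MeasurableSpace 𝒜] [MeasurableSingletonClass 𝒜]
    (S : Ω → 𝒮) (A : Ω → 𝒜) (hS : Measurable S) (hA : Measurable A)
    (hindep : ProbabilityTheory.IndepFun S A μ)
    (hSpos : ∀ s, 0 < μ {ω | S ω = s}) (hApos : ∀ a, 0 < μ {ω | A ω = a})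
    (R : Ω → ℝ) (hR : MemLp R 2 μ)
    (m : 𝒜 → ℝ)
    (hm : ∀ a, m a =
      (∫ ω, Set.indicator {ω' | A ω' = a} R ω ∂μ) / (μ {ω | A ω = a}).toReal)
    (r : 𝒮 → 𝒜 → ℝ)
    (hr : ∀ s a, r s a =
      (∫ ω, Set.indicator {ω' | S ω' = s ∧ A ω' = a} R ω ∂μ) /
        (μ {ω | S ω = s ∧ A ω = a}).toReal)
    (πb : 𝒜 → ℝ) (hπb : ∀ a, πb a = (μ {ω | A ω = a}).toReal)
    (πe : 𝒜 → ℝ) (hπenn : ∀ a, 0 ≤ πe a) (hπesum : ∑ a, πe a = 1)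
    (W : Ω → ℝ) (hW : ∀ ω, W ω = πe (A ω) / πb (A ω)) :
    var μ (fun ω => ∑ a, πe a * r (S ω) a) +
        var μ (fun ω => W ω * (R ω - r (S ω) (A ω))) ≤
      var μ (fun ω => W ω * (R ω - m (A ω))) := by
  classical
  let p : 𝒮 → ℝ := fun s => (μ {ω | S ω = s}).toReal
  let q : 𝒜 → ℝ := fun a => (μ {ω | A ω = a}).toReal
  let w : 𝒜 → ℝ := fun a => πe a / q a
  let H : 𝒮 → ℝ := fun s => ∑ a, πe a * r s a
  let t2 : 𝒮 → 𝒜 → ℝ := fun s a =>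
    ∫ ω, Set.indicator {ω' | S ω' = s ∧ A ω' = a} (fun ω' => R ω' ^ 2) ω ∂μ
  have hppos : ∀ s, 0 < p s := fun s => ENNReal.toReal_pos (hSpos s).ne' (measure_ne_top μ _)
  have hqpos : ∀ a, 0 < q a := fun a => ENNReal.toReal_pos (hApos a).ne' (measure_ne_top μ _)
  have hE : ∀ (s : 𝒮) (a : 𝒜), MeasurableSet {ω | S ω = s ∧ A ω = a} := by
    intro s a
    have h : {ω | S ω = s ∧ A ω = a} = S ⁻¹' {s} ∩ A ⁻¹' {a} := by
      ext ω; simp [Set.mem_preimage]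
    rw [h]
    exact (hS (measurableSet_singleton s)).inter (hA (measurableSet_singleton a))
  have hjoint : ∀ s a, (μ {ω | S ω = s ∧ A ω = a}).toReal = p s * q a := by
    intro s a
    have h := hindep.measure_inter_preimage_eq_mul _ _
      (measurableSet_singleton s) (measurableSet_singleton a)
    have hset : {ω | S ω = s ∧ A ω = a} = S ⁻¹' {s} ∩ A ⁻¹' {a} := by
      ext ω; simp [Set.mem_preimage]
    have hset2 : S ⁻¹' {s} = {ω | S ω = s} := by ext ω; simp
    have hset3 : A ⁻¹' {a} = {ω | A ω = a} := by ext ω; simp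
    rw [hset, h, hset2, hset3, ENNReal.toReal_mul]
  have hRint : Integrable R μ := hR.integrable one_le_two
  have hR2int : Integrable (fun ω => R ω ^ 2) μ := hR.integrable_sq
  have hJ1 : ∀ s a, ∫ ω, Set.indicator {ω' | S ω' = s ∧ A ω' = a} R ω ∂μ
      = r s a * (p s * q a) := by
    intro s a
    have h := hr s a
    rw [hjoint s a] at h
    exact ((eq_div_iff (mul_pos (hppos s) (hqpos a)).ne').mp h).symm
  have hJ0 : ∀ s a, ∫ ω, Set.indicator {ω' | S ω' = s ∧ A ω' = a} (fun _ => (1:ℝ)) ω ∂μ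
      = p s * q a := by
    intro s a
    have h : ∫ ω, Set.indicator {ω' | S ω' = s ∧ A ω' = a} (fun _ => (1:ℝ)) ω ∂μ
        = (μ {ω | S ω = s ∧ A ω = a}).toReal := integral_indicator_one (hE s a)
    rw [h, hjoint]
  have hW' : ∀ ω, W ω = w (A ω) := by
    intro ω
    rw [hW ω, hπb (A ω)]
  have hsp : ∑ s, p s = 1 := by
    have h := fiberS_decomp μ S hS (fun _ => (1:ℝ))
    simp only [one_mul, integral_const, measureReal_def, measure_univ, ENNReal.toReal_one, smul_eq_mul,
      mul_one] at h
    exact h.symm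
  have hsq : ∑ a, q a = 1 := by
    have h : ∫ ω, (fun (_ : 𝒮) (_ : 𝒜) => (1:ℝ)) (S ω) (A ω) * (fun _ => (1:ℝ)) ω ∂μ
        = ∑ s, ∑ a, (1:ℝ) * ∫ ω, Set.indicator {ω' | S ω' = s ∧ A ω' = a} (fun _ => (1:ℝ)) ω ∂μ :=
      (fiber_decomp μ S A hS hA (fun _ _ => (1:ℝ)) (fun _ => (1:ℝ)) (integrable_const 1)).2
    simp only [one_mul, mul_one, integral_const, measureReal_def, measure_univ, ENNReal.toReal_one,
      smul_eq_mul, hJ0] at h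
    have h2 : ∑ s, ∑ a, p s * q a = (∑ s, p s) * (∑ a, q a) := by
      rw [Finset.sum_mul]
      exact Finset.sum_congr rfl fun s _ => (Finset.mul_sum _ _ _).symm
    rw [h2, hsp, one_mul] at h
    exact h.symm
  have hK : ∀ a, m a = ∑ s, p s * r s a := by
    intro a
    have he : ∫ ω, (fun (_ : 𝒮) (a' : 𝒜) => if a' = a then (1:ℝ) else 0) (S ω) (A ω) * R ω ∂μ
        = ∑ s, ∑ a', (if a' = a then (1:ℝ) else 0)
            * ∫ ω, Set.indicator {ω' | S ω' = s ∧ A ω' = a'} R ω ∂μ :=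
      (fiber_decomp μ S A hS hA (fun _ a' => if a' = a then (1:ℝ) else 0) R hRint).2
    have hpt : (fun ω => Set.indicator {ω' | A ω' = a} R ω)
        = fun ω => (if A ω = a then (1:ℝ) else 0) * R ω := by
      funext ω
      by_cases h : A ω = a <;> simp [Set.indicator_apply, Set.mem_setOf_eq, h]
    have h2 : ∫ ω, Set.indicator {ω' | A ω' = a} R ω ∂μ = ∑ s, r s a * (p s * q a) := by
      rw [hpt]
      rw [he]
      refine Finset.sum_congr rfl fun s _ => ?_
      rw [Finset.sum_eq_single a]
      · rw [if_pos rfl, one_mul, hJ1]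
      · intro a' _ ha'
        rw [if_neg ha', zero_mul]
      · simp
    have h3 : ∑ s, r s a * (p s * q a) = (∑ s, p s * r s a) * q a := by
      rw [Finset.sum_mul]
      exact Finset.sum_congr rfl fun s _ => by ring
    rw [hm a, h2, h3, mul_div_cancel_right₀ _ (hqpos a).ne']
  -- mean computation
  have hmean : ∀ φ : 𝒮 → 𝒜 → ℝ,
      ∫ ω, W ω * (R ω - φ (S ω) (A ω)) ∂μ
        = ∑ s, ∑ a, (w a * (r s a * (p s * q a)) - (w a * φ s a) * (p s * q a)) := by
    intro φ
    have hi1 : Integrable (fun ω => w (A ω) * R ω) μ :=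
      (fiber_decomp μ S A hS hA (fun _ a => w a) R hRint).1
    have hi0 : Integrable (fun ω => (w (A ω) * φ (S ω) (A ω)) * (1:ℝ)) μ :=
      (fiber_decomp μ S A hS hA (fun s a => w a * φ s a) (fun _ => (1:ℝ))
        (integrable_const 1)).1
    have he1 : ∫ ω, w (A ω) * R ω ∂μ
        = ∑ s, ∑ a, w a * ∫ ω, Set.indicator {ω' | S ω' = s ∧ A ω' = a} R ω ∂μ :=
      (fiber_decomp μ S A hS hA (fun _ a => w a) R hRint).2
    have he0 : ∫ ω, (w (A ω) * φ (S ω) (A ω)) * (1:ℝ) ∂μ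
        = ∑ s, ∑ a, (w a * φ s a)
            * ∫ ω, Set.indicator {ω' | S ω' = s ∧ A ω' = a} (fun _ => (1:ℝ)) ω ∂μ :=
      (fiber_decomp μ S A hS hA (fun s a => w a * φ s a) (fun _ => (1:ℝ))
        (integrable_const 1)).2
    have hpt : (fun ω => W ω * (R ω - φ (S ω) (A ω)))
        = fun ω => w (A ω) * R ω - (w (A ω) * φ (S ω) (A ω)) * (1:ℝ) := by
      funext ω; rw [hW' ω]; ring
    rw [hpt, integral_sub hi1 hi0, he1, he0, ← Finset.sum_sub_distrib]
    refine Finset.sum_congr rfl fun s _ => ?_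
    rw [← Finset.sum_sub_distrib]
    refine Finset.sum_congr rfl fun a _ => ?_
    rw [hJ1 s a, hJ0 s a]
  -- second moment computation
  have hsqint : ∀ φ : 𝒮 → 𝒜 → ℝ,
      ∫ ω, (W ω * (R ω - φ (S ω) (A ω))) ^ 2 ∂μ
        = ∑ s, ∑ a, (w a ^ 2 * t2 s a
            - (2 * (w a ^ 2 * φ s a)) * (r s a * (p s * q a))
            + (w a ^ 2 * φ s a ^ 2) * (p s * q a)) := by
    intro φ
    have hiA : Integrable (fun ω => w (A ω) ^ 2 * R ω ^ 2) μ :=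
      (fiber_decomp μ S A hS hA (fun _ a => w a ^ 2) (fun ω => R ω ^ 2) hR2int).1
    have heA : ∫ ω, w (A ω) ^ 2 * R ω ^ 2 ∂μ = ∑ s, ∑ a, w a ^ 2 * t2 s a :=
      (fiber_decomp μ S A hS hA (fun _ a => w a ^ 2) (fun ω => R ω ^ 2) hR2int).2
    have hiB : Integrable (fun ω => (-(2 * (w (A ω) ^ 2 * φ (S ω) (A ω)))) * R ω) μ :=
      (fiber_decomp μ S A hS hA (fun s a => -(2 * (w a ^ 2 * φ s a))) R hRint).1
    have heB : ∫ ω, (-(2 * (w (A ω) ^ 2 * φ (S ω) (A ω)))) * R ω ∂μ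
        = ∑ s, ∑ a, (-(2 * (w a ^ 2 * φ s a)))
            * ∫ ω, Set.indicator {ω' | S ω' = s ∧ A ω' = a} R ω ∂μ :=
      (fiber_decomp μ S A hS hA (fun s a => -(2 * (w a ^ 2 * φ s a))) R hRint).2
    have hiC : Integrable (fun ω => (w (A ω) ^ 2 * φ (S ω) (A ω) ^ 2) * (1:ℝ)) μ :=
      (fiber_decomp μ S A hS hA (fun s a => w a ^ 2 * φ s a ^ 2) (fun _ => (1:ℝ))
        (integrable_const 1)).1
    have heC : ∫ ω, (w (A ω) ^ 2 * φ (S ω) (A ω) ^ 2) * (1:ℝ) ∂μ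
        = ∑ s, ∑ a, (w a ^ 2 * φ s a ^ 2)
            * ∫ ω, Set.indicator {ω' | S ω' = s ∧ A ω' = a} (fun _ => (1:ℝ)) ω ∂μ :=
      (fiber_decomp μ S A hS hA (fun s a => w a ^ 2 * φ s a ^ 2) (fun _ => (1:ℝ))
        (integrable_const 1)).2
    have hpt : (fun ω => (W ω * (R ω - φ (S ω) (A ω))) ^ 2)
        = fun ω => w (A ω) ^ 2 * R ω ^ 2
            + ((-(2 * (w (A ω) ^ 2 * φ (S ω) (A ω)))) * R ω
              + (w (A ω) ^ 2 * φ (S ω) (A ω) ^ 2) * (1:ℝ)) := by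
      funext ω; rw [hW' ω]; ring
    have hiBC : Integrable (fun ω => (-(2 * (w (A ω) ^ 2 * φ (S ω) (A ω)))) * R ω
        + (w (A ω) ^ 2 * φ (S ω) (A ω) ^ 2) * (1:ℝ)) μ := hiB.add hiC
    rw [hpt, integral_add hiA hiBC, integral_add hiB hiC, heA, heB, heC,
      ← Finset.sum_add_distrib, ← Finset.sum_add_distrib]
    refine Finset.sum_congr rfl fun s _ => ?_
    rw [← Finset.sum_add_distrib, ← Finset.sum_add_distrib]
    refine Finset.sum_congr rfl fun a _ => ?_
    rw [hJ1 s a, hJ0 s a]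
    ring
  -- the six integrals
  have hEh : ∫ ω, (∑ a, πe a * r (S ω) a) ∂μ = ∑ s, H s * p s :=
    fiberS_decomp μ S hS H
  have hEh2 : ∫ ω, (∑ a, πe a * r (S ω) a) ^ 2 ∂μ = ∑ s, H s ^ 2 * p s :=
    fiberS_decomp μ S hS (fun s => H s ^ 2)
  have hEf0 : ∫ ω, W ω * (R ω - r (S ω) (A ω)) ∂μ = 0 := by
    rw [hmean r]
    exact Finset.sum_eq_zero fun s _ => Finset.sum_eq_zero fun a _ => by ring
  have hEg0 : ∫ ω, W ω * (R ω - m (A ω)) ∂μ = 0 := by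
    have h : ∫ ω, W ω * (R ω - m (A ω)) ∂μ
        = ∑ s, ∑ a, (w a * (r s a * (p s * q a)) - (w a * m a) * (p s * q a)) :=
      hmean (fun _ a => m a)
    rw [h, Finset.sum_comm]
    refine Finset.sum_eq_zero fun a _ => ?_
    have h2 : ∑ s, (w a * (r s a * (p s * q a)) - (w a * m a) * (p s * q a))
        = (w a * q a) * (∑ s, p s * r s a) - (w a * m a * q a) * (∑ s, p s) := by
      rw [Finset.mul_sum, Finset.mul_sum, ← Finset.sum_sub_distrib]
      exact Finset.sum_congr rfl fun s _ => by ring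
    rw [h2, ← hK a, hsp]; ring
  have hEf2 : ∫ ω, (W ω * (R ω - r (S ω) (A ω))) ^ 2 ∂μ
      = ∑ s, ∑ a, (w a ^ 2 * t2 s a
          - (2 * (w a ^ 2 * r s a)) * (r s a * (p s * q a))
          + (w a ^ 2 * r s a ^ 2) * (p s * q a)) := hsqint r
  have hEg2 : ∫ ω, (W ω * (R ω - m (A ω))) ^ 2 ∂μ
      = ∑ s, ∑ a, (w a ^ 2 * t2 s a
          - (2 * (w a ^ 2 * m a)) * (r s a * (p s * q a))
          + (w a ^ 2 * m a ^ 2) * (p s * q a)) := hsqint (fun _ a => m a)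
  -- main algebraic inequality
  have hmain : (∑ s, p s * (H s)^2) - (∑ s, p s * H s)^2 ≤
      ∑ s, ∑ a, (p s * (πe a ^ 2 / q a)) * (r s a - m a) ^ 2 := by
    refine final_alg p q πe (fun s a => r s a - m a) H (∑ a, πe a * m a)
      (fun s => (hppos s).le) hqpos hsp hsq (fun s => ?_)
    rw [← Finset.sum_sub_distrib]
    exact Finset.sum_congr rfl fun a _ => by ring
  have hV : ∑ s, ∑ a, (p s * (πe a ^ 2 / q a)) * (r s a - m a) ^ 2
      = (∑ s, ∑ a, (w a ^ 2 * t2 s a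
          - (2 * (w a ^ 2 * m a)) * (r s a * (p s * q a))
          + (w a ^ 2 * m a ^ 2) * (p s * q a)))
        - (∑ s, ∑ a, (w a ^ 2 * t2 s a
          - (2 * (w a ^ 2 * r s a)) * (r s a * (p s * q a))
          + (w a ^ 2 * r s a ^ 2) * (p s * q a))) := by
    rw [← Finset.sum_sub_distrib]
    refine Finset.sum_congr rfl fun s _ => ?_
    rw [← Finset.sum_sub_distrib]
    refine Finset.sum_congr rfl fun a _ => ?_
    have hq0 : q a ≠ 0 := (hqpos a).ne'
    have hw : w a = πe a / q a := rfl
    rw [hw]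
    field_simp
    ring
  have c1 : ∑ s, H s ^ 2 * p s = ∑ s, p s * H s ^ 2 :=
    Finset.sum_congr rfl fun s _ => mul_comm _ _
  have c2 : ∑ s, H s * p s = ∑ s, p s * H s :=
    Finset.sum_congr rfl fun s _ => mul_comm _ _
  simp only [var]
  rw [hEh, hEh2, hEf0, hEf2, hEg0, hEg2, c1, c2]
  rw [hV] at hmain
  nlinarith [hmain]
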